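/- (Proposition 3, SER with a δ-covering codebook.) Let t ≥ 1. There exists δ₀ > 0 (depending only on t) such that for all δ ∈ (0, δ₀) and all P > 0 the following holds: if m : ℂ^t → ℂ^t is a measurable map with ‖m(h)‖ = 1 and |⟨m(h), h⟩|² ≥ (1 − δ)·‖h‖² for all h, then ∫ Q(√(2·|⟨m(h), h⟩|²·P)) dμ(h) ≤ (1 + 2tδ)·∫ Q(√(2·‖h‖²·P)) dμ(h). -/

import Mathlib

open MeasureTheory

noncomputable instance (t : ℕ) : MeasureSpace (EuclideanSpace ℂ (Fin t)) where
  volume := (volume : Measure (Fin t → ℂ)).map (WithLp.toLp 2)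

/-- The Gaussian tail function `Q(x) = (1/√(2π)) ∫_x^∞ exp(-u²/2) du`. -/
noncomputable def gaussianQ (x : ℝ) : ℝ :=
  (Real.sqrt (2 * Real.pi))⁻¹ * ∫ u in Set.Ioi x, Real.exp (-(u ^ 2) / 2)

/-- The standard complex Gaussian measure `CN(0, I_t)` on `ℂ^t`, with density
`h ↦ π^{-t} exp(-‖h‖²)` with respect to Lebesgue measure. -/
noncomputable def stdCGauss (t : ℕ) : Measure (EuclideanSpace ℂ (Fin t)) :=
  volume.withDensity fun h => ENNReal.ofReal ((Real.pi ^ t)⁻¹ * Real.exp (-‖h‖ ^ 2))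

instance (t : ℕ) : BorelSpace (EuclideanSpace ℂ (Fin t)) := inferInstance

instance (t : ℕ) : (volume : Measure (EuclideanSpace ℂ (Fin t))).IsAddHaarMeasure :=
  (PiLp.continuousLinearEquiv 2 ℂ (fun _ : Fin t => ℂ)).symm.isAddHaarMeasure_map volume

section Aux

lemma integrable_exp_half_sq : Integrable (fun u : ℝ => Real.exp (-(u ^ 2) / 2)) := by
  have h : Integrable (fun u : ℝ => Real.exp (-(2⁻¹ : ℝ) * u ^ 2)) :=
    integrable_exp_neg_mul_sq (by norm_num)
  convert h using 2 with u
  ring_nf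

/-- A uniform bound for `gaussianQ`. -/
noncomputable def gaussM : ℝ :=
  (Real.sqrt (2 * Real.pi))⁻¹ * ∫ u, Real.exp (-(u ^ 2) / 2)

lemma gaussianQ_nonneg (x : ℝ) : 0 ≤ gaussianQ x := by
  apply mul_nonneg (by positivity)
  exact integral_nonneg fun u => (Real.exp_pos _).le

lemma gaussM_nonneg : 0 ≤ gaussM :=
  mul_nonneg (by positivity) (integral_nonneg fun u => (Real.exp_pos _).le)

lemma gaussianQ_le_gaussM (x : ℝ) : gaussianQ x ≤ gaussM := by
  apply mul_le_mul_of_nonneg_left _ (by positivity)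
  exact setIntegral_le_integral integrable_exp_half_sq
    (Filter.Eventually.of_forall fun u => (Real.exp_pos _).le)

lemma gaussianQ_antitone : Antitone gaussianQ := by
  intro x y hxy
  apply mul_le_mul_of_nonneg_left _ (by positivity)
  apply setIntegral_mono_set integrable_exp_half_sq.integrableOn
    (Filter.Eventually.of_forall fun u => (Real.exp_pos _).le)
  exact Filter.Eventually.of_forall fun u hu => lt_of_le_of_lt hxy hu

lemma gaussianQ_measurable : Measurable gaussianQ := gaussianQ_antitone.measurable

lemma integrable_exp_neg_mul_sq_complex {b : ℝ} (hb : 0 < b) :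
    Integrable (fun z : ℂ => Real.exp (-(b * ‖z‖ ^ 2))) := by
  rw [← (MeasurePreserving.symm Complex.measurableEquivPi
      Complex.volume_preserving_equiv_pi).integrable_comp_emb
    (Complex.measurableEquivPi.symm.measurableEmbedding)]
  have h : ∀ p : Fin 2 → ℝ, ((fun z : ℂ => Real.exp (-(b * ‖z‖ ^ 2))) ∘
      Complex.measurableEquivPi.symm) p = ∏ i : Fin 2, Real.exp (-b * (p i) ^ 2) := by
    intro p
    simp only [Function.comp_apply, Complex.measurableEquivPi_symm_apply]
    rw [Fin.prod_univ_two, ← Real.exp_add, Complex.sq_norm,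
      Complex.normSq_add_mul_I, mul_add]
    try ring_nf
  rw [funext h]
  exact Integrable.fintype_prod (f := fun _ (v : ℝ) => Real.exp (-b * v ^ 2))
    (fun _ => integrable_exp_neg_mul_sq hb)

/-- The identity measurable equivalence between the pi type and Euclidean space. -/
noncomputable def euclidEquiv (t : ℕ) : (Fin t → ℂ) ≃ᵐ EuclideanSpace ℂ (Fin t) where
  toEquiv := (WithLp.equiv 2 _).symm
  measurable_toFun := WithLp.measurable_toLp 2 _
  measurable_invFun := WithLp.measurable_ofLp 2 _

lemma measurePreserving_euclidEquiv (t : ℕ) :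
    MeasurePreserving (euclidEquiv t) volume volume :=
  ⟨(euclidEquiv t).measurable, rfl⟩

lemma integrable_exp_neg_mul_sq_norm (t : ℕ) {b : ℝ} (hb : 0 < b) :
    Integrable (fun v : EuclideanSpace ℂ (Fin t) => Real.exp (-(b * ‖v‖ ^ 2))) := by
  rw [← (measurePreserving_euclidEquiv t).integrable_comp_emb
    (euclidEquiv t).measurableEmbedding]
  have h : ∀ p : Fin t → ℂ, ((fun v : EuclideanSpace ℂ (Fin t) => Real.exp (-(b * ‖v‖ ^ 2))) ∘
      (euclidEquiv t)) p = ∏ i : Fin t, Real.exp (-(b * ‖p i‖ ^ 2)) := by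
    intro p
    simp only [Function.comp_apply]
    rw [← Real.exp_sum]
    congr 1
    have h2 : ‖(euclidEquiv t) p‖ ^ 2 = ∑ i, ‖p i‖ ^ 2 := by
      rw [EuclideanSpace.norm_eq, Real.sq_sqrt]
      · rfl
      · positivity
    rw [h2, Finset.mul_sum]
    try rfl
    try simp [neg_mul, Finset.sum_neg_distrib]
  rw [funext h]
  exact Integrable.fintype_prod (f := fun _ (z : ℂ) => Real.exp (-(b * ‖z‖ ^ 2)))
    (fun _ => integrable_exp_neg_mul_sq_complex hb)

/-- Integrability of a bounded nonnegative function against a Gaussian-type density. -/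
lemma integrable_density_mul (t : ℕ) {b : ℝ} (hb : 0 < b)
    (f : EuclideanSpace ℂ (Fin t) → ℝ) (hf : Measurable f)
    (h0 : ∀ h, 0 ≤ f h) (hM : ∀ h, f h ≤ gaussM) :
    Integrable (fun h : EuclideanSpace ℂ (Fin t) =>
      (Real.pi ^ t)⁻¹ * Real.exp (-(b * ‖h‖ ^ 2)) * f h) := by
  apply Integrable.mono (((integrable_exp_neg_mul_sq_norm t hb).const_mul
    ((Real.pi ^ t)⁻¹ * gaussM)))
  · apply Measurable.aestronglyMeasurable
    apply Measurable.mul _ hf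
    apply Measurable.const_mul
    exact (measurable_id.norm.pow_const 2).const_mul b |>.neg.exp
  · apply Filter.Eventually.of_forall
    intro h
    have he : (0:ℝ) < Real.exp (-(b * ‖h‖ ^ 2)) := Real.exp_pos _
    have hpi : (0:ℝ) ≤ (Real.pi ^ t)⁻¹ := by positivity
    rw [Real.norm_eq_abs, Real.norm_eq_abs, abs_of_nonneg, abs_of_nonneg]
    · calc (Real.pi ^ t)⁻¹ * Real.exp (-(b * ‖h‖ ^ 2)) * f h
          ≤ (Real.pi ^ t)⁻¹ * Real.exp (-(b * ‖h‖ ^ 2)) * gaussM := by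
            exact mul_le_mul_of_nonneg_left (hM h) (mul_nonneg hpi he.le)
        _ = (Real.pi ^ t)⁻¹ * gaussM * Real.exp (-(b * ‖h‖ ^ 2)) := by ring
    · exact mul_nonneg (mul_nonneg hpi gaussM_nonneg) he.le
    · exact mul_nonneg (mul_nonneg hpi he.le) (h0 h)

lemma stdCGauss_integral_eq (t : ℕ) (g : EuclideanSpace ℂ (Fin t) → ℝ) :
    ∫ h, g h ∂(stdCGauss t)
      = ∫ h, ((Real.pi ^ t)⁻¹ * Real.exp (-(1 * ‖h‖ ^ 2))) * g h := by
  have hd : ∀ h : EuclideanSpace ℂ (Fin t),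
      (0:ℝ) ≤ (Real.pi ^ t)⁻¹ * Real.exp (-‖h‖ ^ 2) := fun h => by positivity
  have hmeas : Measurable fun h : EuclideanSpace ℂ (Fin t) =>
      ((Real.pi ^ t)⁻¹ * Real.exp (-‖h‖ ^ 2)).toNNReal := by
    apply Measurable.real_toNNReal
    exact ((measurable_id.norm.pow_const 2).neg.exp).const_mul _
  rw [stdCGauss]
  rw [show (fun h : EuclideanSpace ℂ (Fin t) =>
      ENNReal.ofReal ((Real.pi ^ t)⁻¹ * Real.exp (-‖h‖ ^ 2)))
    = (fun h : EuclideanSpace ℂ (Fin t) =>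
      (((Real.pi ^ t)⁻¹ * Real.exp (-‖h‖ ^ 2)).toNNReal : ENNReal)) from rfl]
  rw [integral_withDensity_eq_integral_smul hmeas g]
  congr 1
  funext h
  rw [NNReal.smul_def, Real.coe_toNNReal _ (hd h), smul_eq_mul, one_mul]


/-- The scaling step: integrating `G (c ‖h‖²)` against the Gaussian density costs at most a
factor `c⁻¹ ^ t` compared to integrating `G (‖h‖²)`. -/
lemma key_scaling (t : ℕ) (G : ℝ → ℝ) (hG : Measurable G) (hG0 : ∀ r, 0 ≤ G r)
    (hGM : ∀ r, G r ≤ gaussM) {c : ℝ} (hc0 : 0 < c) (hc1 : c ≤ 1) :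
    ∫ h : EuclideanSpace ℂ (Fin t),
        ((Real.pi ^ t)⁻¹ * Real.exp (-(1 * ‖h‖ ^ 2))) * G (c * ‖h‖ ^ 2)
      ≤ c⁻¹ ^ t * ∫ h : EuclideanSpace ℂ (Fin t),
        ((Real.pi ^ t)⁻¹ * Real.exp (-(1 * ‖h‖ ^ 2))) * G (‖h‖ ^ 2) := by
  have hpi : (0:ℝ) ≤ (Real.pi ^ t)⁻¹ := by positivity
  have hfr : Module.finrank ℝ (EuclideanSpace ℂ (Fin t)) = 2 * t := by
    rw [← Module.finrank_mul_finrank ℝ ℂ (EuclideanSpace ℂ (Fin t)),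
      Complex.finrank_real_complex, finrank_euclideanSpace, Fintype.card_fin]
  set Φ : EuclideanSpace ℂ (Fin t) → ℝ :=
    fun h => ((Real.pi ^ t)⁻¹ * Real.exp (-(1 * ‖h‖ ^ 2))) * G (c * ‖h‖ ^ 2) with hΦdef
  set R : ℝ := (Real.sqrt c)⁻¹ with hRdef
  have hRpos : 0 < R := inv_pos.2 (Real.sqrt_pos.2 hc0)
  have hR2 : R ^ 2 = c⁻¹ := by rw [hRdef, inv_pow, Real.sq_sqrt hc0.le]
  have hcs := Measure.integral_comp_smul
    (volume : Measure (EuclideanSpace ℂ (Fin t))) Φ R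
  rw [hfr, abs_of_pos (by positivity), smul_eq_mul] at hcs
  have hpt : ∀ x : EuclideanSpace ℂ (Fin t), Φ (R • x)
      = ((Real.pi ^ t)⁻¹ * Real.exp (-(c⁻¹ * ‖x‖ ^ 2))) * G (‖x‖ ^ 2) := by
    intro x
    have hn : ‖R • x‖ = R * ‖x‖ := by
      rw [norm_smul, Real.norm_eq_abs, abs_of_pos hRpos]
    rw [hΦdef]
    simp only
    rw [hn, mul_pow, hR2, one_mul, ← mul_assoc c, mul_inv_cancel₀ hc0.ne', one_mul]
  have hint1 : Integrable (fun x : EuclideanSpace ℂ (Fin t) =>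
      ((Real.pi ^ t)⁻¹ * Real.exp (-(c⁻¹ * ‖x‖ ^ 2))) * G (‖x‖ ^ 2)) :=
    integrable_density_mul t (by positivity) _
      (hG.comp (measurable_id.norm.pow_const 2)) (fun h => hG0 _) (fun h => hGM _)
  have hint2 : Integrable (fun x : EuclideanSpace ℂ (Fin t) =>
      ((Real.pi ^ t)⁻¹ * Real.exp (-(1 * ‖x‖ ^ 2))) * G (‖x‖ ^ 2)) :=
    integrable_density_mul t one_pos _
      (hG.comp (measurable_id.norm.pow_const 2)) (fun h => hG0 _) (fun h => hGM _)
  have hinvc : (1:ℝ) ≤ c⁻¹ := by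
    rw [← one_div, le_div_iff₀ hc0, one_mul]; exact hc1
  have key1 : ∫ x, Φ (R • x) ≤ ∫ x : EuclideanSpace ℂ (Fin t),
      ((Real.pi ^ t)⁻¹ * Real.exp (-(1 * ‖x‖ ^ 2))) * G (‖x‖ ^ 2) := by
    rw [funext hpt]
    apply integral_mono hint1 hint2
    intro x
    apply mul_le_mul_of_nonneg_right _ (hG0 _)
    apply mul_le_mul_of_nonneg_left _ hpi
    apply Real.exp_le_exp.mpr
    have : 1 * ‖x‖ ^ 2 ≤ c⁻¹ * ‖x‖ ^ 2 :=
      mul_le_mul_of_nonneg_right hinvc (by positivity)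
    linarith
  have hΦeq : ∫ x, Φ x = R ^ (2 * t) * ∫ x, Φ (R • x) := by
    rw [hcs, ← mul_assoc, mul_inv_cancel₀ (pow_ne_zero _ hRpos.ne'), one_mul]
  have hRpow : R ^ (2 * t) = c⁻¹ ^ t := by rw [pow_mul, hR2]
  calc ∫ x, Φ x = R ^ (2 * t) * ∫ x, Φ (R • x) := hΦeq
    _ ≤ R ^ (2 * t) * ∫ x : EuclideanSpace ℂ (Fin t),
        ((Real.pi ^ t)⁻¹ * Real.exp (-(1 * ‖x‖ ^ 2))) * G (‖x‖ ^ 2) :=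
      mul_le_mul_of_nonneg_left key1 (by positivity)
    _ = c⁻¹ ^ t * _ := by rw [hRpow]

end Aux

/-- Proposition 3: if a (measurable) beamforming map always attains SNR at least
`(1-δ)‖h‖² P`, then its SER is at most `(1 + 2tδ)` times the full-CSIT SER, for all
sufficiently small `δ` and all `P > 0`. -/
theorem ser_with_delta_covering (t : ℕ) (ht : 1 ≤ t) :
    ∃ δ₀ : ℝ, 0 < δ₀ ∧ ∀ δ : ℝ, 0 < δ → δ < δ₀ → ∀ P : ℝ, 0 < P →
      ∀ m : EuclideanSpace ℂ (Fin t) → EuclideanSpace ℂ (Fin t),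
        Measurable m →
        (∀ h, ‖m h‖ = 1) →
        (∀ h, (1 - δ) * ‖h‖ ^ 2 ≤ ‖(inner ℂ (m h) h : ℂ)‖ ^ 2) →
        ∫ h, gaussianQ (Real.sqrt (2 * ‖(inner ℂ (m h) h : ℂ)‖ ^ 2 * P)) ∂(stdCGauss t)
          ≤ (1 + 2 * t * δ)
            * ∫ h, gaussianQ (Real.sqrt (2 * ‖h‖ ^ 2 * P)) ∂(stdCGauss t) := by
  refine ⟨1 / (2 * t), by positivity, ?_⟩
  intro δ hδ0 hδ1 P hP m hm hnorm hsnr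
  have hT1 : (1:ℝ) ≤ (t:ℝ) := by exact_mod_cast ht
  have h2t : (0:ℝ) < 2 * t := by positivity
  have htδ : (t:ℝ) * δ < 1 / 2 := by
    have h := (lt_div_iff₀ h2t).mp hδ1
    nlinarith
  have hc0 : (0:ℝ) < 1 - δ := by nlinarith
  have hc1 : (1:ℝ) - δ ≤ 1 := by linarith
  set G : ℝ → ℝ := fun r => gaussianQ (Real.sqrt (2 * r * P)) with hGdef
  have hGanti : Antitone G := by
    intro r s hrs
    apply gaussianQ_antitone
    apply Real.sqrt_le_sqrt
    nlinarith
  have hGmeas : Measurable G := hGanti.measurable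
  have hG0 : ∀ r, 0 ≤ G r := fun r => gaussianQ_nonneg _
  have hGM : ∀ r, G r ≤ gaussM := fun r => gaussianQ_le_gaussM _
  have hinner : Measurable fun h : EuclideanSpace ℂ (Fin t) =>
      ‖(inner ℂ (m h) h : ℂ)‖ ^ 2 := ((hm.inner measurable_id).norm.pow_const 2)
  have hnormsq : Measurable fun h : EuclideanSpace ℂ (Fin t) => ‖h‖ ^ 2 :=
    measurable_id.norm.pow_const 2
  have hint1 : Integrable (fun h : EuclideanSpace ℂ (Fin t) =>
      ((Real.pi ^ t)⁻¹ * Real.exp (-(1 * ‖h‖ ^ 2))) * G (‖(inner ℂ (m h) h : ℂ)‖ ^ 2)) :=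
    integrable_density_mul t one_pos _ (hGmeas.comp hinner)
      (fun h => hG0 _) (fun h => hGM _)
  have hint2 : Integrable (fun h : EuclideanSpace ℂ (Fin t) =>
      ((Real.pi ^ t)⁻¹ * Real.exp (-(1 * ‖h‖ ^ 2))) * G ((1 - δ) * ‖h‖ ^ 2)) :=
    integrable_density_mul t one_pos _ (hGmeas.comp (hnormsq.const_mul _))
      (fun h => hG0 _) (fun h => hGM _)
  rw [stdCGauss_integral_eq t (fun h => gaussianQ
      (Real.sqrt (2 * ‖(inner ℂ (m h) h : ℂ)‖ ^ 2 * P))),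
    stdCGauss_integral_eq t (fun h => gaussianQ (Real.sqrt (2 * ‖h‖ ^ 2 * P)))]
  have step1 : ∫ h : EuclideanSpace ℂ (Fin t),
      ((Real.pi ^ t)⁻¹ * Real.exp (-(1 * ‖h‖ ^ 2)))
        * gaussianQ (Real.sqrt (2 * ‖(inner ℂ (m h) h : ℂ)‖ ^ 2 * P))
      ≤ ∫ h : EuclideanSpace ℂ (Fin t),
      ((Real.pi ^ t)⁻¹ * Real.exp (-(1 * ‖h‖ ^ 2))) * G ((1 - δ) * ‖h‖ ^ 2) := by
    apply integral_mono hint1 hint2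
    intro h
    apply mul_le_mul_of_nonneg_left _ (by positivity)
    apply hGanti
    exact hsnr h
  have step2 := key_scaling t G hGmeas hG0 hGM hc0 hc1
  have hCnonneg : 0 ≤ ∫ h : EuclideanSpace ℂ (Fin t),
      ((Real.pi ^ t)⁻¹ * Real.exp (-(1 * ‖h‖ ^ 2))) * G (‖h‖ ^ 2) :=
    integral_nonneg fun h => mul_nonneg (by positivity) (hG0 _)
  have hconst : ((1:ℝ) - δ)⁻¹ ^ t ≤ 1 + 2 * t * δ := by
    have hpow0 : (0:ℝ) < (1 - δ) ^ t := pow_pos hc0 t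
    have hbern : 1 - (t:ℝ) * δ ≤ (1 - δ) ^ t := by
      have h := one_add_mul_le_pow (a := -δ) (by linarith : (-2:ℝ) ≤ -δ) t
      simpa [sub_eq_add_neg, mul_neg] using h
    have htδ0 : 0 < (t:ℝ) * δ := by positivity
    have hup : (0:ℝ) ≤ 1 + 2 * (t:ℝ) * δ := by nlinarith
    have hmul := mul_le_mul_of_nonneg_left hbern hup
    have hkey : 1 ≤ (1 + 2 * (t:ℝ) * δ) * (1 - δ) ^ t := by nlinarith [hmul, htδ, htδ0]
    rw [inv_pow, ← one_div, div_le_iff₀ hpow0]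
    linarith
  calc ∫ h : EuclideanSpace ℂ (Fin t),
      ((Real.pi ^ t)⁻¹ * Real.exp (-(1 * ‖h‖ ^ 2)))
        * gaussianQ (Real.sqrt (2 * ‖(inner ℂ (m h) h : ℂ)‖ ^ 2 * P))
      ≤ ∫ h : EuclideanSpace ℂ (Fin t),
        ((Real.pi ^ t)⁻¹ * Real.exp (-(1 * ‖h‖ ^ 2))) * G ((1 - δ) * ‖h‖ ^ 2) := step1
    _ ≤ ((1 - δ))⁻¹ ^ t * ∫ h : EuclideanSpace ℂ (Fin t),
        ((Real.pi ^ t)⁻¹ * Real.exp (-(1 * ‖h‖ ^ 2))) * G (‖h‖ ^ 2) := step2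
    _ ≤ (1 + 2 * t * δ) * ∫ h : EuclideanSpace ℂ (Fin t),
        ((Real.pi ^ t)⁻¹ * Real.exp (-(1 * ‖h‖ ^ 2))) * G (‖h‖ ^ 2) :=
      mul_le_mul_of_nonneg_right hconst hCnonneg
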